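/- For each prime p in the set {5, 13, 37} and each integer x with 0 ≤ x ≤ (p-3)/2, the value F_p(x) = 2x² + 2x + (p+1)/2 is a prime number. Consequently, since F_p(x+1) - F_p(x) = 4(x+1), these primes form a regular ((p-1)/2)-plet with consecutive distances 4(x+1). -/
import Mathlib


/-- For each prime `p ∈ {5, 13, 37}` and each `0 ≤ x ≤ (p-3)/2`,
the value `F_p(x) = 2*x² + 2*x + (p+1)/2` is prime; moreover
`F_p(x+1) - F_p(x) = 4*(x+1)`, so these primes form a regular `(p-1)/2`-plet with
consecutive distances `4*(x+1)`. -/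
theorem stmt_17 :
    ∀ p ∈ ({5, 13, 37} : Set ℕ),
      (∀ x : ℕ, x ≤ (p - 3) / 2 → Nat.Prime (2 * x ^ 2 + 2 * x + (p + 1) / 2)) ∧
      (∀ x : ℕ, (2 * (x + 1) ^ 2 + 2 * (x + 1) + (p + 1) / 2)
          - (2 * x ^ 2 + 2 * x + (p + 1) / 2) = 4 * (x + 1)) := by
  intro p hp
  refine ⟨?_, fun x => by ring_nf; omega⟩
  rcases hp with rfl | rfl | rfl
  · intro x hx
    interval_cases x <;> norm_num
  · intro x hx
    interval_cases x <;> norm_num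
  · intro x hx
    interval_cases x <;> norm_num
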